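/- Let V be a positive abelian semigroup equipped with the algebraic order, and suppose V satisfies the discrete strong Corona Factorization Property: for every x ∈ V, every sequence (y_n) in V and every positive integer m with x ≤ m·y_n for all n, there exists k with x ≤ y_1 + y_2 + ⋯ + y_k. Then the semigroup Λ_σ(V) of countably generated intervals in V, with addition I + J = {x ∈ V : x ≤ y + z for some y ∈ I, z ∈ J} and order given by inclusion, satisfies the strong Corona Factorization Property: whenever X', X, Y_1, Y_2, … are countably generated intervals and m is a positive integer with X' ≪ X and X ⊆ m·Y_n for all n, there exists k with X' ⊆ Y_1 + Y_2 + ⋯ + Y_k. -/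
import Mathlib


namespace Stmt10

variable {V : Type*} [AddCommSemigroup V]

/-- The algebraic order on a (positive) abelian semigroup `V`:
`x ≤ y` iff `y = x` or `y = x + z` for some `z ∈ V`. -/
def ordAlg (x y : V) : Prop := x = y ∨ ∃ z : V, y = x + z

/-- `rep n x` is the `(n+1)`-fold sum `x + ⋯ + x`, so that `rep n x = (n+1)·x`. -/
def rep : ℕ → V → V
  | 0, x => x
  | n + 1, x => rep n x + x

/-- `sumTo y k = y 0 + y 1 + ⋯ + y k`. -/
def sumTo (y : ℕ → V) : ℕ → V
  | 0 => y 0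
  | k + 1 => sumTo y k + y (k + 1)

/-- An interval in `V` (w.r.t. the algebraic order): non-empty, order-hereditary, and
upwards directed. -/
def IsInterval (I : Set V) : Prop :=
  I.Nonempty ∧ (∀ x y : V, ordAlg x y → y ∈ I → x ∈ I) ∧
    ∀ x ∈ I, ∀ y ∈ I, ∃ z ∈ I, ordAlg x z ∧ ordAlg y z

/-- A countably generated interval. -/
def CountablyGenerated (I : Set V) : Prop :=
  IsInterval I ∧ ∃ x : ℕ → V, (∀ n, x n ∈ I) ∧ I = {v : V | ∃ n, ordAlg v (x n)}

/-- The sum of two intervals: `I + J = {x : x ≤ y + z for some y ∈ I, z ∈ J}`. -/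
def setAdd (I J : Set V) : Set V := {x : V | ∃ y ∈ I, ∃ z ∈ J, ordAlg x (y + z)}

/-- `repSet m Y` is the `(m+1)`-fold sum `Y + Y + ⋯ + Y` of the interval `Y`. -/
def repSet : ℕ → Set V → Set V
  | 0, Y => Y
  | m + 1, Y => setAdd (repSet m Y) Y

/-- `sumToSet Y k = Y 0 + Y 1 + ⋯ + Y k`. -/
def sumToSet (Y : ℕ → Set V) : ℕ → Set V
  | 0 => Y 0
  | k + 1 => setAdd (sumToSet Y k) (Y (k + 1))

/-- Compact containment of intervals: `I ≪ J` iff for every increasing sequence of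
intervals whose union contains `J`, some term contains `I`. -/
def ccInt (I J : Set V) : Prop :=
  ∀ Jn : ℕ → Set V, (∀ n, IsInterval (Jn n)) → Monotone Jn →
    J ⊆ ⋃ n, Jn n → ∃ n, I ⊆ Jn n

theorem ordAlg_refl (x : V) : ordAlg x x := Or.inl rfl

theorem ordAlg_trans {x y z : V} (h1 : ordAlg x y) (h2 : ordAlg y z) : ordAlg x z := by
  rcases h1 with rfl | ⟨a, ha⟩
  · exact h2
  · rcases h2 with rfl | ⟨b, hb⟩
    · exact Or.inr ⟨a, ha⟩
    · exact Or.inr ⟨a + b, by rw [hb, ha, add_assoc]⟩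

theorem ordAlg_add {x y x' y' : V} (h1 : ordAlg x y) (h2 : ordAlg x' y') :
    ordAlg (x + x') (y + y') := by
  rcases h1 with rfl | ⟨a, ha⟩ <;> rcases h2 with rfl | ⟨b, hb⟩
  · exact Or.inl rfl
  · exact Or.inr ⟨b, by rw [hb, add_assoc]⟩
  · exact Or.inr ⟨a, by rw [ha]; rw [add_right_comm]⟩
  · exact Or.inr ⟨a + b, by rw [ha, hb, add_add_add_comm]⟩

theorem rep_mono {x y : V} (h : ordAlg x y) : ∀ m, ordAlg (rep m x) (rep m y)
  | 0 => h
  | m + 1 => ordAlg_add (rep_mono h m) h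

theorem isInterval_setAdd {I J : Set V} (hI : IsInterval I) (hJ : IsInterval J) :
    IsInterval (setAdd I J) := by
  obtain ⟨⟨a, ha⟩, hIh, hId⟩ := hI
  obtain ⟨⟨b, hb⟩, hJh, hJd⟩ := hJ
  refine ⟨⟨a + b, a, ha, b, hb, ordAlg_refl _⟩, ?_, ?_⟩
  · rintro x y hxy ⟨u, hu, v, hv, huv⟩
    exact ⟨u, hu, v, hv, ordAlg_trans hxy huv⟩
  · rintro x ⟨u, hu, v, hv, huv⟩ y ⟨u', hu', v', hv', huv'⟩
    obtain ⟨u'', hu'', h1, h2⟩ := hId u hu u' hu'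
    obtain ⟨v'', hv'', h3, h4⟩ := hJd v hv v' hv'
    exact ⟨u'' + v'', ⟨u'', hu'', v'', hv'', ordAlg_refl _⟩,
      ordAlg_trans huv (ordAlg_add h1 h3), ordAlg_trans huv' (ordAlg_add h2 h4)⟩

theorem mem_setAdd_left {I J : Set V} (hJ : J.Nonempty) {x : V} (hx : x ∈ I) :
    x ∈ setAdd I J := by
  obtain ⟨b, hb⟩ := hJ
  exact ⟨x, hx, b, hb, Or.inr ⟨b, rfl⟩⟩

/-- Any element of the `(m+1)`-fold sum of an interval `Y` lies below `(m+1)·z` for some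
`z ∈ Y`. -/
theorem repSet_bound {Y : Set V} (hY : IsInterval Y) :
    ∀ m, ∀ x ∈ repSet m Y, ∃ z ∈ Y, ordAlg x (rep m z)
  | 0, x, hx => ⟨x, hx, ordAlg_refl _⟩
  | m + 1, x, hx => by
    obtain ⟨u, hu, v, hv, huv⟩ := hx
    obtain ⟨z, hz, hz'⟩ := repSet_bound hY m u hu
    obtain ⟨w, hw, h1, h2⟩ := hY.2.2 z hz v hv
    exact ⟨w, hw, ordAlg_trans huv
      (ordAlg_add (ordAlg_trans hz' (rep_mono h1 m)) h2)⟩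

theorem isInterval_sumToSet {Y : ℕ → Set V} (hY : ∀ n, IsInterval (Y n)) :
    ∀ k, IsInterval (sumToSet Y k)
  | 0 => hY 0
  | k + 1 => isInterval_setAdd (isInterval_sumToSet hY k) (hY (k + 1))

theorem sumTo_mem {Y : ℕ → Set V} {z : ℕ → V} (hz : ∀ n, z n ∈ Y n) :
    ∀ k, sumTo z k ∈ sumToSet Y k
  | 0 => hz 0
  | k + 1 => ⟨sumTo z k, sumTo_mem hz k, z (k + 1), hz (k + 1), ordAlg_refl _⟩

/-- Remark 2.16: if `V` (a positive abelian semigroup with the algebraic order) satisfies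
the discrete strong Corona Factorization Property, then the semigroup `Λ_σ(V)` of
countably generated intervals satisfies the strong Corona Factorization Property:
whenever `X' ≪ X` and `X ⊆ m·Y_n` for all `n` (with `m` a positive integer, encoded as
`m+1`), there is `k` with `X' ⊆ Y_0 + Y_1 + ⋯ + Y_k`. -/
theorem lambda_sigma_strong_cfp
    (hV : ∀ (x : V) (y : ℕ → V) (m : ℕ),
      (∀ n, ordAlg x (rep m (y n))) → ∃ k, ordAlg x (sumTo y k))
    (X' X : Set V) (Y : ℕ → Set V) (m : ℕ)
    (hX' : CountablyGenerated X') (hX : CountablyGenerated X)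
    (hY : ∀ n, CountablyGenerated (Y n))
    (hcc : ccInt X' X) (hle : ∀ n, X ⊆ repSet m (Y n)) :
    ∃ k, X' ⊆ sumToSet Y k := by
  have hYint : ∀ n, IsInterval (Y n) := fun n => (hY n).1
  apply hcc (fun k => sumToSet Y k) (fun k => isInterval_sumToSet hYint k)
  · apply monotone_nat_of_le_succ
    intro k x hx
    exact mem_setAdd_left (hYint (k + 1)).1 hx
  · intro x hx
    have hbd : ∀ n, ∃ z ∈ Y n, ordAlg x (rep m z) :=
      fun n => repSet_bound (hYint n) m x (hle n hx)
    choose z hz hz' using hbd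
    obtain ⟨k, hk⟩ := hV x z m hz'
    exact Set.mem_iUnion.2 ⟨k, ((isInterval_sumToSet hYint k).2.1) x _ hk (sumTo_mem hz k)⟩

end Stmt10
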